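/- If the greedy leftmost path-building algorithm on G(n,p₁) stops when the set U of unvisited vertices has size |U| = 2 log n / p₁, then with high probability the smallest index j₁ of a vertex in U satisfies j₁ ≥ n − 4 log n / p₁, and the resulting Hamilton cycle H obtained by appending any Hamilton path through U satisfies ι(H) ≤ Σ_{j≤j₀} α_j + |U|·(n − j₁), where α_j counts later-visited vertices with smaller label than v_j. -/

import Mathlib

open Filter Topology

attribute [local instance] Classical.propDecidable

noncomputable def erWeight (n : ℕ) (p : ℝ) (X : Sym2 (Fin n) → Bool) : ℝ :=
  ∏ e : Sym2 (Fin n),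
    if e.IsDiag then (if X e then 0 else 1) else (if X e then p else 1 - p)

noncomputable def bP (n : ℕ) (p : ℝ) (A : (Sym2 (Fin n) → Bool) → Prop) : ℝ :=
  ∑ X : Sym2 (Fin n) → Bool, erWeight n p X * (if A X then 1 else 0)

/-- The next vertex of the greedy walk: the unvisited neighbour of `cur` of
smallest index, if any. -/
noncomputable def nextV {n : ℕ} (X : Sym2 (Fin n) → Bool) (cur : Fin n)
    (vis : Finset (Fin n)) : Option (Fin n) :=
  if h : (Finset.univ.filter (fun t => t ∉ vis ∧ X s(cur, t))).Nonempty
  then some ((Finset.univ.filter (fun t => t ∉ vis ∧ X s(cur, t))).min' h)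
  else none

/-- The state (current vertex, visited set) of the greedy leftmost walk started
at the vertex of index `0`, after `j` steps; `none` if the walk has died. -/
noncomputable def gstate {n : ℕ} (X : Sym2 (Fin n) → Bool) :
    ℕ → Option (Fin n × Finset (Fin n))
  | 0 => if h : 0 < n then some (⟨0, h⟩, {⟨0, h⟩}) else none
  | (j + 1) => (gstate X j).bind (fun s =>
      (nextV X s.1 s.2).map (fun v => (v, insert v s.2)))

/-- `α_j(σ)`: the number of positions `k > j` whose entry `σ k` is smaller
than `σ j` (later-visited vertices with smaller label). -/
noncomputable def alphaInv {n : ℕ} (σ : Equiv.Perm (Fin n)) (j : Fin n) : ℕ :=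
  (Finset.univ.filter (fun k => j < k ∧ σ k < σ j)).card

/-- The number of inversions `ι(σ) = Σ_j α_j(σ)`. -/
noncomputable def iotaInv {n : ℕ} (σ : Equiv.Perm (Fin n)) : ℕ :=
  ∑ j, alphaInv σ j

section basics
variable {n : ℕ} {p : ℝ}

/-- single-coordinate weight -/
noncomputable def ew (n : ℕ) (p : ℝ) (e : Sym2 (Fin n)) (b : Bool) : ℝ :=
  if e.IsDiag then (if b then 0 else 1) else (if b then p else 1 - p)

lemma erWeight_eq (X : Sym2 (Fin n) → Bool) :
    erWeight n p X = ∏ e : Sym2 (Fin n), ew n p e (X e) := rfl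

lemma ew_nonneg (hp0 : 0 ≤ p) (hp1 : p ≤ 1) (e : Sym2 (Fin n)) (b : Bool) :
    0 ≤ ew n p e b := by
  unfold ew; split_ifs <;> simp_all <;> linarith

lemma erWeight_nonneg (hp0 : 0 ≤ p) (hp1 : p ≤ 1) (X : Sym2 (Fin n) → Bool) :
    0 ≤ erWeight n p X := by
  rw [erWeight_eq]; exact Finset.prod_nonneg fun e _ => ew_nonneg hp0 hp1 e _

/-- Master product formula. -/
lemma bP_forall (Q : Sym2 (Fin n) → Bool → Prop) :
    bP n p (fun X => ∀ e, Q e (X e)) =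
      ∏ e : Sym2 (Fin n), ∑ b : Bool, (if Q e b then ew n p e b else 0) := by
  rw [Fintype.prod_sum (f := fun e b => if Q e b then ew n p e b else 0)]
  unfold bP
  refine Finset.sum_congr rfl fun X _ => ?_
  rw [erWeight_eq]
  by_cases h : ∀ e, Q e (X e)
  · rw [if_pos h, mul_one]
    exact Finset.prod_congr rfl fun e _ => by rw [if_pos (h e)]
  · rw [if_neg h, mul_zero]
    obtain ⟨e, he⟩ := not_forall.mp h
    exact (Finset.prod_eq_zero (Finset.mem_univ e) (by rw [if_neg he])).symm

lemma bP_true : bP n p (fun _ => True) = 1 := by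
  have := bP_forall (n := n) (p := p) (fun _ _ => True)
  simp only [if_true, if_pos trivial] at this ⊢
  rw [show (fun (X : Sym2 (Fin n) → Bool) => ∀ _ : Sym2 (Fin n), True) = fun _ => True by
    funext; simp] at this
  rw [this]
  refine Finset.prod_eq_one fun e _ => ?_
  unfold ew
  by_cases h : e.IsDiag <;> simp [h]

lemma bP_nonneg (hp0 : 0 ≤ p) (hp1 : p ≤ 1) (A : (Sym2 (Fin n) → Bool) → Prop) :
    0 ≤ bP n p A := by
  refine Finset.sum_nonneg fun X _ => mul_nonneg (erWeight_nonneg hp0 hp1 X) ?_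
  split_ifs <;> norm_num

lemma bP_mono (hp0 : 0 ≤ p) (hp1 : p ≤ 1) {A B : (Sym2 (Fin n) → Bool) → Prop}
    (h : ∀ X, A X → B X) : bP n p A ≤ bP n p B := by
  refine Finset.sum_le_sum fun X _ => ?_
  refine mul_le_mul_of_nonneg_left ?_ (erWeight_nonneg hp0 hp1 X)
  split_ifs with h1 h2
  · exact le_refl 1
  · exact absurd (h X h1) h2
  · norm_num
  · exact le_refl 0

lemma bP_add_compl (A : (Sym2 (Fin n) → Bool) → Prop) :
    bP n p A + bP n p (fun X => ¬ A X) = 1 := by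
  rw [← bP_true (n := n) (p := p)]
  unfold bP
  rw [← Finset.sum_add_distrib]
  refine Finset.sum_congr rfl fun X _ => ?_
  rw [← mul_add]
  by_cases h : A X <;> simp [h]

/-- finite subadditivity via a pointwise indicator bound -/
lemma bP_le_sum {ι : Type*} (hp0 : 0 ≤ p) (hp1 : p ≤ 1) (s : Finset ι)
    (A : (Sym2 (Fin n) → Bool) → Prop) (B : ι → (Sym2 (Fin n) → Bool) → Prop)
    (h : ∀ X, A X → ∃ i ∈ s, B i X) :
    bP n p A ≤ ∑ i ∈ s, bP n p (B i) := by
  unfold bP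
  rw [Finset.sum_comm]
  refine Finset.sum_le_sum fun X _ => ?_
  rw [← Finset.mul_sum]
  refine mul_le_mul_of_nonneg_left ?_ (erWeight_nonneg hp0 hp1 X)
  by_cases hA : A X
  · obtain ⟨i, hi, hBi⟩ := h X hA
    rw [if_pos hA]
    calc (1:ℝ) = ∑ j ∈ {i}, (if B j X then (1:ℝ) else 0) := by
          rw [Finset.sum_singleton, if_pos hBi]
      _ ≤ _ := Finset.sum_le_sum_of_subset_of_nonneg (Finset.singleton_subset_iff.mpr hi)
          (fun j _ _ => by split_ifs <;> norm_num)
  · rw [if_neg hA]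
    exact Finset.sum_nonneg fun j _ => by split_ifs <;> norm_num

/-- pairwise-exclusive family sums to at most one -/
lemma sum_bP_le_one {ι : Type*} (hp0 : 0 ≤ p) (hp1 : p ≤ 1) (s : Finset ι)
    (B : ι → (Sym2 (Fin n) → Bool) → Prop)
    (h : ∀ X, ∀ i ∈ s, ∀ j ∈ s, B i X → B j X → i = j) :
    ∑ i ∈ s, bP n p (B i) ≤ 1 := by
  rw [← bP_true (n := n) (p := p)]
  unfold bP
  rw [Finset.sum_comm]
  refine Finset.sum_le_sum fun X _ => ?_
  rw [← Finset.mul_sum]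
  refine mul_le_mul_of_nonneg_left ?_ (erWeight_nonneg hp0 hp1 X)
  rw [if_pos trivial]
  by_cases hex : ∃ i ∈ s, B i X
  · obtain ⟨i, hi, hBi⟩ := hex
    have : ∀ j ∈ s, (if B j X then (1:ℝ) else 0) = if j = i then 1 else 0 := by
      intro j hj
      split_ifs with h1 h2 h2 <;> try rfl
      · exact absurd (h X j hj i hi h1 hBi) h2
      · rw [h2] at h1; exact absurd hBi h1
    rw [Finset.sum_congr rfl this, Finset.sum_ite_eq' s i (fun _ => (1:ℝ)), if_pos hi]
  · push_neg at hex
    rw [Finset.sum_congr rfl (fun j hj => if_neg (hex j hj))]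
    simp

end basics

section sat
variable {n : ℕ} {p : ℝ}

def Sat {n : ℕ} (c : Sym2 (Fin n) → Option Bool) (X : Sym2 (Fin n) → Bool) : Prop :=
  ∀ e b, c e = some b → X e = b

noncomputable def thP (n : ℕ) (p : ℝ) (c : Sym2 (Fin n) → Option Bool)
    (e : Sym2 (Fin n)) : ℝ :=
  match c e with
  | none => 1
  | some b => ew n p e b

lemma bP_sat (c : Sym2 (Fin n) → Option Bool) :
    bP n p (Sat c) = ∏ e : Sym2 (Fin n), thP n p c e := by
  have h0 := bP_forall (n := n) (p := p) (fun e v => ∀ b', c e = some b' → v = b')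
  unfold Sat
  rw [h0]
  refine Finset.prod_congr rfl fun e _ => ?_
  unfold thP
  rcases h : c e with _ | b
  · rw [Fintype.sum_bool]
    simp only [show ∀ b' : Bool, ((none : Option Bool) = some b') = False by simp,
      false_implies, forall_const, ite_true, if_true]
    unfold ew; by_cases hd : e.IsDiag <;> simp [hd]
  · rw [Fintype.sum_bool]
    cases b <;> simp

/-- adding `false` constraints on a fresh nondiagonal set `D` multiplies by `(1-p)^|D|` -/
lemma bP_sat_extend (c : Sym2 (Fin n) → Option Bool) (D : Finset (Sym2 (Fin n)))
    (hD : ∀ e ∈ D, ¬ e.IsDiag) (hdisj : ∀ e ∈ D, c e = none) :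
    bP n p (fun X => Sat c X ∧ ∀ e ∈ D, X e = false) =
      bP n p (Sat c) * (1 - p) ^ D.card := by
  have hev : (fun X : Sym2 (Fin n) → Bool => Sat c X ∧ ∀ e ∈ D, X e = false) =
      Sat (fun e => if e ∈ D then some false else c e) := by
    funext X
    simp only [Sat, eq_iff_iff]
    constructor
    · rintro ⟨h1, h2⟩ e b hb
      by_cases he : e ∈ D
      · rw [if_pos he] at hb; injection hb with hb; rw [← hb]; exact h2 e he
      · rw [if_neg he] at hb; exact h1 e b hb
    · intro h
      constructor
      · intro e b hb
        have hne : e ∉ D := fun he => by rw [hdisj e he] at hb; exact nomatch hb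
        exact h e b (by rw [if_neg hne]; exact hb)
      · intro e he
        exact h e false (by rw [if_pos he])
  rw [hev, bP_sat, bP_sat]
  have : ∀ e : Sym2 (Fin n),
      thP n p (fun e => if e ∈ D then some false else c e) e =
        thP n p c e * (if e ∈ D then (1 - p) else 1) := by
    intro e
    unfold thP
    by_cases he : e ∈ D
    · simp only [he, if_true, ite_true, hdisj e he]
      simp [ew, hD e he]
    · simp only [he, if_false, ite_false]
      ring
  rw [Finset.prod_congr rfl (fun e _ => this e), Finset.prod_mul_distrib,
    Fintype.prod_ite_mem, Finset.prod_const]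
end sat

section walk
variable {n : ℕ}

lemma nextV_eq_some_iff {X : Sym2 (Fin n) → Bool} {cur w : Fin n} {vis : Finset (Fin n)} :
    nextV X cur vis = some w ↔
      (w ∉ vis ∧ X s(cur, w) ∧ ∀ t, t ∉ vis → t < w → ¬ X s(cur, t)) := by
  unfold nextV
  split_ifs with h
  · constructor
    · intro hw; injection hw with hw
      have hmem := Finset.min'_mem _ h
      rw [hw] at hmem
      simp only [Finset.mem_filter, Finset.mem_univ, true_and] at hmem
      refine ⟨hmem.1, hmem.2, ?_⟩
      intro t ht hlt hX
      have htm : t ∈ Finset.univ.filter (fun t => t ∉ vis ∧ X s(cur, t)) := by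
        simp only [Finset.mem_filter, Finset.mem_univ, true_and]; exact ⟨ht, hX⟩
      have := Finset.min'_le _ t htm
      rw [hw] at this
      exact absurd hlt (not_lt.mpr this)
    · rintro ⟨h1, h2, h3⟩
      have hle : Finset.min' _ h ≤ w := Finset.min'_le _ w (by
        simp only [Finset.mem_filter, Finset.mem_univ, true_and]; exact ⟨h1, h2⟩)
      have hge : w ≤ Finset.min' _ h := by
        by_contra hlt
        push_neg at hlt
        have hmem := Finset.min'_mem _ h
        simp only [Finset.mem_filter, Finset.mem_univ, true_and] at hmem
        exact h3 _ hmem.1 hlt hmem.2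
      rw [le_antisymm hle hge]
  · constructor
    · intro h'; exact absurd h' (by simp)
    · rintro ⟨h1, h2, _⟩
      exact absurd (Finset.filter_nonempty_iff.mpr ⟨w, Finset.mem_univ w, h1, h2⟩) h

lemma nextV_eq_none_iff {X : Sym2 (Fin n) → Bool} {cur : Fin n} {vis : Finset (Fin n)} :
    nextV X cur vis = none ↔ ∀ t, t ∉ vis → ¬ X s(cur, t) := by
  unfold nextV
  split_ifs with h
  · simp only [reduceCtorEq, false_iff]
    push_neg
    obtain ⟨t, ht⟩ := h
    simp only [Finset.mem_filter, Finset.mem_univ, true_and] at ht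
    exact ⟨t, ht.1, ht.2⟩
  · simp only [true_iff]
    intro t ht hX
    exact h (Finset.filter_nonempty_iff.mpr ⟨t, Finset.mem_univ t, ht, hX⟩)

/-- skipping an irrelevant smaller vertex -/
lemma nextV_insert {X : Sym2 (Fin n) → Bool} {cur w v : Fin n} {vis : Finset (Fin n)}
    (h : nextV X cur vis = some w) (hvw : v ≠ w) :
    nextV X cur (insert v vis) = some w := by
  rw [nextV_eq_some_iff] at h ⊢
  obtain ⟨h1, h2, h3⟩ := h
  refine ⟨by simp [hvw.symm, h1], h2, ?_⟩
  intro t ht hlt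
  exact h3 t (fun hm => ht (Finset.mem_insert_of_mem hm)) hlt

lemma nextV_skip {X : Sym2 (Fin n) → Bool} {cur w v : Fin n} {vis : Finset (Fin n)}
    (h : nextV X cur vis = some w) (hv : v ∉ vis) (hlt : v < w) : ¬ X s(cur, v) :=
  (nextV_eq_some_iff.mp h).2.2 v hv hlt

end walk

section walk2
variable {n : ℕ}

/-- greedy walk with an extra forbidden set `A` -/
noncomputable def gA (A : Finset (Fin n)) (X : Sym2 (Fin n) → Bool) :
    ℕ → Option (Fin n × Finset (Fin n))
  | 0 => if h : 0 < n then some (⟨0, h⟩, insert ⟨0, h⟩ A) else none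
  | (j + 1) => (gA A X j).bind (fun s =>
      (nextV X s.1 s.2).map (fun v => (v, insert v s.2)))

lemma gA_succ_eq_some_iff {A : Finset (Fin n)} {X : Sym2 (Fin n) → Bool} {j : ℕ}
    {st' : Fin n × Finset (Fin n)} :
    gA A X (j + 1) = some st' ↔
      ∃ st, gA A X j = some st ∧ nextV X st.1 st.2 = some st'.1 ∧
        st'.2 = insert st'.1 st.2 := by
  show (gA A X j).bind _ = some st' ↔ _
  rcases h : gA A X j with _ | st
  · simp
  · rw [Option.bind_some]
    rcases h2 : nextV X st.1 st.2 with _ | w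
    · simp only [Option.map_none, reduceCtorEq, false_iff]
      rintro ⟨st2, hst2, h4, -⟩
      injection hst2 with hst2
      subst hst2
      rw [h2] at h4
      exact nomatch h4
    · simp only [Option.map_some]
      constructor
      · intro h3
        injection h3 with h3
        exact ⟨st, rfl, by rw [h2, ← h3], by rw [← h3]⟩
      · rintro ⟨st2, hst2, h4, h5⟩
        injection hst2 with hst2
        subst hst2
        rw [h2] at h4
        injection h4 with h4
        congr 1
        rw [Prod.ext_iff]
        exact ⟨h4, by rw [h5, h4]⟩

lemma gstate_eq_gA (X : Sym2 (Fin n) → Bool) (j : ℕ) : gstate X j = gA ∅ X j := by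
  induction j with
  | zero =>
    show _ = gA ∅ X 0
    unfold gstate gA
    rfl
  | succ j ih =>
    show (gstate X j).bind _ = (gA ∅ X j).bind _
    rw [ih]

/-- visited set of a trajectory -/
noncomputable def visA (A : Finset (Fin n)) (f : ℕ → Fin n) (i : ℕ) : Finset (Fin n) :=
  A ∪ (Finset.range (i + 1)).image f

/-- the walk follows trajectory `f` for `j` steps -/
def FolA (A : Finset (Fin n)) (f : ℕ → Fin n) (j : ℕ) (X : Sym2 (Fin n) → Bool) : Prop :=
  ∀ i ≤ j, gA A X i = some (f i, visA A f i)

/-- admissibility of a trajectory -/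
def Adm (A : Finset (Fin n)) (f : ℕ → Fin n) (j : ℕ) : Prop :=
  (f 0 : ℕ) = 0 ∧ ∀ i < j, f (i + 1) ∉ visA A f i

lemma visA_succ (A : Finset (Fin n)) (f : ℕ → Fin n) (i : ℕ) :
    visA A f (i + 1) = insert (f (i + 1)) (visA A f i) := by
  unfold visA
  rw [Finset.range_add_one, Finset.image_insert]
  rw [Finset.union_comm A, Finset.union_comm A, Finset.insert_union]

lemma mem_visA_self (A : Finset (Fin n)) (f : ℕ → Fin n) {k i : ℕ} (h : k ≤ i) :
    f k ∈ visA A f i :=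
  Finset.mem_union_right _ (Finset.mem_image_of_mem f (Finset.mem_range.mpr (by omega)))

lemma visA_mono (A : Finset (Fin n)) (f : ℕ → Fin n) {i i' : ℕ} (h : i ≤ i') :
    visA A f i ⊆ visA A f i' :=
  Finset.union_subset_union_right (Finset.image_subset_image (by
    intro x hx; simp only [Finset.mem_range] at hx ⊢; omega))

lemma Adm.inj {A : Finset (Fin n)} {f : ℕ → Fin n} {j : ℕ} (h : Adm A f j)
    {k l : ℕ} (hk : k ≤ j) (hl : l ≤ j) (he : f k = f l) : k = l := by
  rcases lt_trichotomy k l with hlt | heq | hlt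
  · exfalso
    obtain ⟨l', rfl⟩ : ∃ l', l = l' + 1 := ⟨l - 1, by omega⟩
    exact h.2 l' (by omega) (he ▸ mem_visA_self A f (by omega))
  · exact heq
  · exfalso
    obtain ⟨k', rfl⟩ : ∃ k', k = k' + 1 := ⟨k - 1, by omega⟩
    exact h.2 k' (by omega) (he.symm ▸ mem_visA_self A f (by omega))

lemma Adm.not_mem_A {A : Finset (Fin n)} {f : ℕ → Fin n} {j : ℕ} (h : Adm A f j)
    {k : ℕ} (hk : k ≤ j) (hk0 : 0 < k) : f k ∉ A := by
  obtain ⟨k', rfl⟩ : ∃ k', k = k' + 1 := ⟨k - 1, by omega⟩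
  intro hmem
  exact h.2 k' (by omega) (Finset.mem_union_left _ hmem)

/-- trajectory existence -/
lemma gA_traj {A : Finset (Fin n)} {X : Sym2 (Fin n) → Bool} {j : ℕ}
    {st : Fin n × Finset (Fin n)} (h : gA A X j = some st) :
    ∃ f : ℕ → Fin n, FolA A f j X ∧ Adm A f j ∧ f j = st.1 ∧ visA A f j = st.2 := by
  induction j generalizing st with
  | zero =>
    have hn : 0 < n := by
      by_contra hn
      unfold gA at h
      rw [dif_neg hn] at h
      exact nomatch h
    have h0 : gA A X 0 = some (⟨0, hn⟩, insert ⟨0, hn⟩ A) := by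
      unfold gA; rw [dif_pos hn]
    have hvis0 : visA A (fun _ : ℕ => (⟨0, hn⟩ : Fin n)) 0 = insert ⟨0, hn⟩ A := by
      unfold visA
      rw [Finset.union_comm]; simp
    refine ⟨fun _ => ⟨0, hn⟩, ?_, ⟨rfl, by omega⟩, ?_, ?_⟩
    · intro i hi
      interval_cases i
      rw [h0, hvis0]
    · rw [h0] at h; injection h with h; rw [← h]
    · rw [h0] at h; injection h with h; rw [← h, hvis0]
  | succ j ih =>
    rw [gA_succ_eq_some_iff] at h
    obtain ⟨st0, hst0, hnext, hins⟩ := h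
    obtain ⟨f, hfol, hadm, hcur, hvis⟩ := ih hst0
    set f' : ℕ → Fin n := fun i => if i ≤ j then f i else st.1 with hf'def
    have hagree : ∀ x, x ≤ j → f' x = f x := fun x hx => by
      simp only [hf'def]; rw [if_pos hx]
    have hlast : f' (j + 1) = st.1 := by
      simp only [hf'def]; rw [if_neg (by omega)]
    have hvisagree : ∀ i' ≤ j, visA A f' i' = visA A f i' := by
      intro i' hi'
      unfold visA
      congr 1
      apply Finset.image_congr
      intro x hx
      simp only [Finset.coe_range, Set.mem_Iio] at hx
      exact hagree x (by omega)
    have hvlast : visA A f' (j + 1) = st.2 := by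
      rw [visA_succ, hvisagree j le_rfl, hlast, hvis, hins]
    refine ⟨f', ?_, ?_, hlast, hvlast⟩
    · intro i hi
      by_cases hij : i ≤ j
      · rw [hvisagree i hij, hagree i hij]; exact hfol i hij
      · have hieq : i = j + 1 := by omega
        subst hieq
        rw [gA_succ_eq_some_iff]
        refine ⟨(f j, visA A f j), hfol j le_rfl, ?_, ?_⟩
        · show nextV X (f j) (visA A f j) = some (f' (j + 1))
          rw [hlast, hcur, hvis]; exact hnext
        · show visA A f' (j + 1) = insert (f' (j + 1)) (visA A f j)
          rw [visA_succ, hvisagree j le_rfl]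
    · constructor
      · rw [hagree 0 (by omega)]; exact hadm.1
      · intro i hi
        have hi' : i ≤ j := by omega
        rw [hvisagree i hi']
        by_cases hij : i + 1 ≤ j
        · rw [hagree _ hij]; exact hadm.2 i (by omega)
        · have hieq : i = j := by omega
          subst hieq
          rw [hlast, hvis]
          exact (nextV_eq_some_iff.mp hnext).1

/-- determinism -/
lemma FolA_unique {A : Finset (Fin n)} {f f' : ℕ → Fin n} {j : ℕ} {X : Sym2 (Fin n) → Bool}
    (h : FolA A f j X) (h' : FolA A f' j X) {i : ℕ} (hi : i ≤ j) : f i = f' i := by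
  have := (h i hi).symm.trans (h' i hi)
  injection this with this
  exact (Prod.ext_iff.mp this).1

lemma FolA_congr {A : Finset (Fin n)} {f f' : ℕ → Fin n} {j : ℕ} {X : Sym2 (Fin n) → Bool}
    (hff' : ∀ i ≤ j, f i = f' i) (h : FolA A f j X) : FolA A f' j X := by
  intro i hi
  have hv : visA A f' i = visA A f i := by
    unfold visA
    congr 1
    apply Finset.image_congr
    intro x hx
    simp only [Finset.coe_range, Set.mem_Iio] at hx
    exact (hff' x (by omega)).symm
  rw [hv, ← hff' i hi]
  exact h i hi

end walk2

section constraints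
variable {n : ℕ}

lemma FolA_nextV {A : Finset (Fin n)} {f : ℕ → Fin n} {j : ℕ} {X : Sym2 (Fin n) → Bool}
    (hfol : FolA A f j X) {i : ℕ} (hi : i < j) :
    nextV X (f i) (visA A f i) = some (f (i + 1)) := by
  have h1 := hfol i (by omega)
  have h2 := hfol (i + 1) (by omega)
  rw [gA_succ_eq_some_iff] at h2
  obtain ⟨st0, hst0, hnext, hins⟩ := h2
  rw [h1] at hst0
  injection hst0 with hst0
  rw [← hst0] at hnext
  exact hnext

lemma gA_succ_none {A : Finset (Fin n)} {X : Sym2 (Fin n) → Bool} {j : ℕ}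
    {st : Fin n × Finset (Fin n)} (h : gA A X j = some st) (h2 : gA A X (j + 1) = none) :
    nextV X st.1 st.2 = none := by
  rcases h3 : nextV X st.1 st.2 with _ | w
  · rfl
  · exfalso
    have : gA A X (j + 1) = some (w, insert w st.2) :=
      gA_succ_eq_some_iff.mpr ⟨st, h, by rw [h3], rfl⟩
    rw [this] at h2
    exact nomatch h2

lemma gA_none_death {X : Sym2 (Fin n) → Bool} {A : Finset (Fin n)} {m : ℕ}
    (hn : 0 < n) (h : gA A X m = none) :
    ∃ j < m, ∃ st, gA A X j = some st ∧ gA A X (j + 1) = none := by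
  induction m with
  | zero =>
    exfalso
    unfold gA at h
    rw [dif_pos hn] at h
    exact nomatch h
  | succ m ih =>
    rcases h2 : gA A X m with _ | st
    · obtain ⟨j, hj, hst⟩ := ih h2
      exact ⟨j, by omega, hst⟩
    · exact ⟨m, by omega, st, h2, h⟩

noncomputable def cF (A : Finset (Fin n)) (f : ℕ → Fin n) (j : ℕ) :
    Sym2 (Fin n) → Option Bool := fun e =>
  if ∃ i, i < j ∧ e = s(f i, f (i + 1)) then some true
  else if ∃ i, i < j ∧ ∃ t, t ∉ visA A f i ∧ t < f (i + 1) ∧ e = s(f i, t) then some false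
  else none

lemma no_conflict {A : Finset (Fin n)} {f : ℕ → Fin n} {j : ℕ} (hadm : Adm A f j)
    {i i' : ℕ} (hi : i < j) (hi' : i' < j) {t : Fin n} (ht : t ∉ visA A f i)
    (hlt : t < f (i + 1)) : s(f i', f (i' + 1)) ≠ s(f i, t) := by
  intro he
  rw [Sym2.eq_iff] at he
  rcases he with ⟨h1, h2⟩ | ⟨h1, h2⟩
  · have hii : i' = i := hadm.inj (by omega) (by omega) h1
    subst hii
    rw [← h2] at hlt
    exact lt_irrefl _ hlt
  · have hii : i' + 1 = i := hadm.inj (by omega) (by omega) h2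
    exact ht (h1 ▸ mem_visA_self A f (by omega))

lemma FolA_iff_sat {A : Finset (Fin n)} {f : ℕ → Fin n} {j : ℕ} {X : Sym2 (Fin n) → Bool}
    (hn : 0 < n) (hadm : Adm A f j) :
    FolA A f j X ↔ Sat (cF A f j) X := by
  have hgA0 : gA A X 0 = some (f 0, visA A f 0) := by
    have hf0 : f 0 = ⟨0, hn⟩ := Fin.ext hadm.1
    have hv : visA A f 0 = insert (f 0) A := by
      unfold visA
      rw [Finset.union_comm]; simp
    rw [hv, hf0]
    unfold gA
    rw [dif_pos hn]
  constructor
  · intro hfol e b hb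
    unfold cF at hb
    split_ifs at hb with h1 h2
    · injection hb with hb
      subst hb
      obtain ⟨i, hij, he⟩ := h1
      subst he
      exact (nextV_eq_some_iff.mp (FolA_nextV hfol hij)).2.1
    · injection hb with hb
      subst hb
      obtain ⟨i, hij, t, ht, hlt, he⟩ := h2
      subst he
      have := (nextV_eq_some_iff.mp (FolA_nextV hfol hij)).2.2 t ht hlt
      simpa using this
  · intro hsat i hi
    induction i with
    | zero => exact hgA0
    | succ i ihi =>
      rw [gA_succ_eq_some_iff]
      refine ⟨(f i, visA A f i), ihi (by omega), ?_, ?_⟩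
      · show nextV X (f i) (visA A f i) = some (f (i + 1))
        rw [nextV_eq_some_iff]
        refine ⟨hadm.2 i (by omega), ?_, ?_⟩
        · have hc : cF A f j s(f i, f (i + 1)) = some true := by
            unfold cF
            rw [if_pos ⟨i, by omega, rfl⟩]
          exact hsat _ _ hc
        · intro t ht hlt hX
          have hc : cF A f j s(f i, t) = some false := by
            unfold cF
            rw [if_neg, if_pos ⟨i, by omega, t, ht, hlt, rfl⟩]
            rintro ⟨i', hi', he⟩
            exact no_conflict hadm (by omega) hi' ht hlt he.symm
          rw [hsat _ _ hc] at hX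
          exact nomatch hX
      · show visA A f (i + 1) = insert (f (i + 1)) (visA A f i)
        exact visA_succ A f i

lemma cF_none_death {A : Finset (Fin n)} {f : ℕ → Fin n} {j : ℕ} (hadm : Adm A f j)
    {u : Fin n} (hu : u ∉ visA A f j) :
    cF A f j s(f j, u) = none := by
  unfold cF
  rw [if_neg, if_neg]
  · rintro ⟨i, hi, t, ht, hlt, he⟩
    rw [Sym2.eq_iff] at he
    rcases he with ⟨h1, h2⟩ | ⟨h1, h2⟩
    · exact absurd (hadm.inj le_rfl (by omega) h1) (by omega)
    · exact hu (h2 ▸ mem_visA_self A f (by omega))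
  · rintro ⟨i, hi, he⟩
    rw [Sym2.eq_iff] at he
    rcases he with ⟨h1, h2⟩ | ⟨h1, h2⟩
    · exact absurd (hadm.inj le_rfl (by omega) h1) (by omega)
    · exact hu (h2 ▸ mem_visA_self A f (by omega))

lemma Adm.ne_v {v : Fin n} {f : ℕ → Fin n} {j : ℕ} (hadm : Adm {v} f j)
    (hv0 : (v : ℕ) ≠ 0) {k : ℕ} (hk : k ≤ j) : f k ≠ v := by
  rcases Nat.eq_zero_or_pos k with rfl | hk0
  · intro h
    apply hv0
    rw [← h]
    exact hadm.1
  · intro h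
    exact hadm.not_mem_A hk hk0 (h ▸ Finset.mem_singleton_self v)

lemma cF_none_v {v : Fin n} {f : ℕ → Fin n} {j : ℕ} (hadm : Adm {v} f j)
    (hv0 : (v : ℕ) ≠ 0) {i : ℕ} (hi : i ≤ j) : cF {v} f j s(f i, v) = none := by
  unfold cF
  rw [if_neg, if_neg]
  · rintro ⟨i', hi', t, ht, hlt, he⟩
    have htv : t ≠ v := fun h => ht (by
      rw [h]
      exact Finset.mem_union_left _ (Finset.mem_singleton_self v))
    rw [Sym2.eq_iff] at he
    rcases he with ⟨h1, h2⟩ | ⟨h1, h2⟩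
    · exact htv h2.symm
    · exact hadm.ne_v hv0 (by omega) h2.symm
  · rintro ⟨i', hi', he⟩
    rw [Sym2.eq_iff] at he
    rcases he with ⟨h1, h2⟩ | ⟨h1, h2⟩
    · exact hadm.ne_v hv0 (by omega) h2.symm
    · exact hadm.ne_v hv0 (by omega) h2.symm

lemma visA_singleton (v : Fin n) (f : ℕ → Fin n) (i : ℕ) :
    visA {v} f i = insert v (visA ∅ f i) := by
  unfold visA
  simp

/-- if the real walk avoids `v`, the `v`-blind walk follows the same trajectory
and all relevant skip edges at `v` are absent -/
lemma avoid_blind {X : Sym2 (Fin n) → Bool} {j : ℕ} {f : ℕ → Fin n} {v : Fin n}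
    (hfol : FolA ∅ f j X) (hadm : Adm ∅ f j) (hv : v ∉ visA ∅ f j) :
    FolA {v} f j X ∧ Adm {v} f j ∧
      ∀ i < j, v < f (i + 1) → ¬ X s(f i, v) := by
  have hn : 0 < n := by
    have := v.isLt
    omega
  have hvI : ∀ i ≤ j, v ∉ visA ∅ f i := fun i hi hm => hv (visA_mono ∅ f hi hm)
  have hvne : ∀ i ≤ j, f i ≠ v := fun i hi h => hvI i hi (h ▸ mem_visA_self ∅ f le_rfl)
  have hfolv : FolA {v} f j X := by
    intro i hi
    induction i with
    | zero =>
      have hf0 : f 0 = ⟨0, hn⟩ := Fin.ext hadm.1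
      have hv0 : visA {v} f 0 = insert (f 0) {v} := by
        unfold visA
        rw [Finset.union_comm]; simp
      rw [hv0, hf0]
      unfold gA
      rw [dif_pos hn]
    | succ i ihi =>
      rw [gA_succ_eq_some_iff]
      refine ⟨(f i, visA {v} f i), ihi (by omega), ?_, ?_⟩
      · show nextV X (f i) (visA {v} f i) = some (f (i + 1))
        rw [visA_singleton]
        exact nextV_insert (FolA_nextV hfol (by omega)) (hvne (i + 1) (by omega)).symm
      · show visA {v} f (i + 1) = insert (f (i + 1)) (visA {v} f i)
        exact visA_succ {v} f i
  refine ⟨hfolv, ⟨hadm.1, ?_⟩, ?_⟩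
  · intro i hi
    rw [visA_singleton]
    intro hmem
    rcases Finset.mem_insert.mp hmem with h | h
    · exact hvne (i + 1) (by omega) h
    · exact hadm.2 i hi h
  · intro i hi hlt
    exact nextV_skip (FolA_nextV hfol hi) (hvI i (by omega)) hlt

end constraints

section probbounds
variable {n : ℕ} {p : ℝ}

lemma bool_eq_false {b : Bool} (h : ¬ b) : b = false := by
  cases b
  · rfl
  · exact absurd rfl h

lemma bP_congr {A B : (Sym2 (Fin n) → Bool) → Prop} (h : ∀ X, A X ↔ B X) :
    bP n p A = bP n p B := by
  unfold bP
  refine Finset.sum_congr rfl fun X _ => ?_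
  congr 1
  by_cases hA : A X
  · rw [if_pos hA, if_pos ((h X).mp hA)]
  · rw [if_neg hA, if_neg (fun hB => hA ((h X).mpr hB))]

lemma visA_congr {A : Finset (Fin n)} {f f' : ℕ → Fin n} {i : ℕ}
    (hff' : ∀ x ≤ i, f x = f' x) : visA A f i = visA A f' i := by
  unfold visA
  congr 1
  apply Finset.image_congr
  intro x hx
  simp only [Finset.coe_range, Set.mem_Iio] at hx
  exact hff' x (by omega)

lemma Adm_congr {A : Finset (Fin n)} {f f' : ℕ → Fin n} {j : ℕ}
    (hff' : ∀ i ≤ j, f i = f' i) (h : Adm A f j) : Adm A f' j := by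
  constructor
  · rw [← hff' 0 (by omega)]
    exact h.1
  · intro i hi
    rw [← visA_congr (fun x hx => hff' x (by omega)), ← hff' (i + 1) (by omega)]
    exact h.2 i hi

lemma visA_empty_card {f : ℕ → Fin n} {j : ℕ} (hadm : Adm (∅ : Finset (Fin n)) f j) :
    (visA ∅ f j).card = j + 1 := by
  unfold visA
  rw [Finset.empty_union]
  rw [Finset.card_image_of_injOn]
  · exact Finset.card_range (j + 1)
  · intro a ha b hb hab
    simp only [Finset.coe_range, Set.mem_Iio] at ha hb
    exact hadm.inj (by omega) (by omega) hab

/-- extension of a finite trajectory to `ℕ` -/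
noncomputable def extT (j : ℕ) (g : Fin (j + 1) → Fin n) : ℕ → Fin n :=
  fun i => g ⟨min i j, by omega⟩

lemma extT_eq {j : ℕ} (g : Fin (j + 1) → Fin n) {k : ℕ} (hk : k ≤ j) :
    extT j g k = g ⟨k, by omega⟩ := by
  unfold extT
  congr 1
  exact Fin.ext (by simp [min_eq_left hk])

lemma extT_apply_fin {j : ℕ} (g : Fin (j + 1) → Fin n) (k : Fin (j + 1)) :
    extT j g (k : ℕ) = g k := by
  rw [extT_eq g (by omega : (k : ℕ) ≤ j)]

/-- probability the walk dies at step `j + 1` -/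
lemma death_bound (hp0 : 0 ≤ p) (hp1 : p ≤ 1) (hn : 0 < n) (j : ℕ) :
    bP n p (fun X => ∃ st, gA ∅ X j = some st ∧ gA ∅ X (j + 1) = none) ≤
      (1 - p) ^ (n - (j + 1)) := by
  classical
  set s := Finset.univ.filter
    (fun g : Fin (j + 1) → Fin n => Adm (∅ : Finset (Fin n)) (extT j g) j) with hs
  set B := fun (g : Fin (j + 1) → Fin n) (X : Sym2 (Fin n) → Bool) =>
      FolA ∅ (extT j g) j X ∧
        ∀ e ∈ (Finset.univ \ visA ∅ (extT j g) j).image (fun u => s(extT j g j, u)),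
          X e = false with hB
  have hcontain : ∀ X, (∃ st, gA ∅ X j = some st ∧ gA ∅ X (j + 1) = none) →
      ∃ g ∈ s, B g X := by
    rintro X ⟨st, hst, hdead⟩
    obtain ⟨f, hfol, hadm, hcur, hvis⟩ := gA_traj hst
    set g : Fin (j + 1) → Fin n := fun k => f k with hg
    have hagree : ∀ i ≤ j, f i = extT j g i := by
      intro i hi
      rw [extT_eq g hi]
    refine ⟨g, Finset.mem_filter.mpr ⟨Finset.mem_univ g, Adm_congr hagree hadm⟩, ?_, ?_⟩
    · exact FolA_congr hagree hfol
    · intro e he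
      simp only [Finset.mem_image, Finset.mem_sdiff, Finset.mem_univ, true_and] at he
      obtain ⟨u, hu, rfl⟩ := he
      have hvg : visA ∅ (extT j g) j = st.2 := by
        rw [← visA_congr hagree, hvis]
      rw [hvg] at hu
      have hnone := gA_succ_none hst hdead
      rw [nextV_eq_none_iff] at hnone
      apply bool_eq_false
      have : extT j g j = st.1 := by rw [← hagree j le_rfl, hcur]
      rw [this]
      exact hnone u hu
  refine le_trans (bP_le_sum hp0 hp1 s _ B hcontain) ?_
  have heach : ∀ g ∈ s, bP n p (B g) =
      bP n p (FolA ∅ (extT j g) j) * (1 - p) ^ (n - (j + 1)) := by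
    intro g hg
    have hadm : Adm (∅ : Finset (Fin n)) (extT j g) j := (Finset.mem_filter.mp hg).2
    set D := (Finset.univ \ visA ∅ (extT j g) j).image (fun u => s(extT j g j, u)) with hD
    have hfj : extT j g j ∈ visA ∅ (extT j g) j := mem_visA_self _ _ le_rfl
    have hDdiag : ∀ e ∈ D, ¬ e.IsDiag := by
      intro e he
      simp only [hD, Finset.mem_image, Finset.mem_sdiff, Finset.mem_univ, true_and] at he
      obtain ⟨u, hu, rfl⟩ := he
      rw [Sym2.mk_isDiag_iff]
      intro hdg
      exact hu (hdg ▸ hfj)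
    have hDnone : ∀ e ∈ D, cF ∅ (extT j g) j e = none := by
      intro e he
      simp only [hD, Finset.mem_image, Finset.mem_sdiff, Finset.mem_univ, true_and] at he
      obtain ⟨u, hu, rfl⟩ := he
      exact cF_none_death hadm hu
    have hcard : D.card = n - (j + 1) := by
      rw [hD, Finset.card_image_of_injOn]
      · rw [Finset.card_sdiff_of_subset (Finset.subset_univ _), Finset.card_univ, Fintype.card_fin,
          visA_empty_card hadm]
      · intro a _ b _ hab
        exact Sym2.congr_right.mp hab
    have h1 : bP n p (B g) = bP n p (fun X => Sat (cF ∅ (extT j g) j) X ∧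
        ∀ e ∈ D, X e = false) := by
      apply bP_congr
      intro X
      rw [hB]
      simp only
      rw [FolA_iff_sat hn hadm]
    rw [h1, bP_sat_extend _ D hDdiag hDnone, hcard]
    congr 1
    apply bP_congr
    intro X
    rw [FolA_iff_sat hn hadm]
  rw [Finset.sum_congr rfl heach, ← Finset.sum_mul]
  have hle1 : ∑ g ∈ s, bP n p (FolA ∅ (extT j g) j) ≤ 1 := by
    apply sum_bP_le_one hp0 hp1
    intro X g hgs g' hgs' hfg hfg'
    funext k
    have := FolA_unique hfg hfg' (show (k : ℕ) ≤ j by omega)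
    rwa [extT_apply_fin, extT_apply_fin] at this
  calc (∑ g ∈ s, bP n p (FolA ∅ (extT j g) j)) * (1 - p) ^ (n - (j + 1))
      ≤ 1 * (1 - p) ^ (n - (j + 1)) :=
        mul_le_mul_of_nonneg_right hle1 (pow_nonneg (by linarith) _)
    _ = (1 - p) ^ (n - (j + 1)) := one_mul _

/-- probability that a fixed nonzero vertex `v` is unvisited after `j` steps -/
lemma avoid_bound (hp0 : 0 ≤ p) (hp1 : p ≤ 1) (hn : 0 < n) (j : ℕ) (v : Fin n)
    (hv0 : (v : ℕ) ≠ 0) :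
    bP n p (fun X => ∃ st, gA ∅ X j = some st ∧ v ∉ st.2) ≤
      (1 - p) ^ (j + 1 - (v : ℕ)) := by
  classical
  set s := Finset.univ.filter
    (fun g : Fin (j + 1) → Fin n => Adm ({v} : Finset (Fin n)) (extT j g) j) with hs
  set Dv := fun g : Fin (j + 1) → Fin n =>
    ((Finset.range j).filter (fun i => v < extT j g (i + 1))).image
      (fun i => s(extT j g i, v)) with hDv
  set B := fun (g : Fin (j + 1) → Fin n) (X : Sym2 (Fin n) → Bool) =>
      FolA {v} (extT j g) j X ∧ ∀ e ∈ Dv g, X e = false with hB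
  have hcontain : ∀ X, (∃ st, gA ∅ X j = some st ∧ v ∉ st.2) → ∃ g ∈ s, B g X := by
    rintro X ⟨st, hst, hvst⟩
    obtain ⟨f, hfol, hadm, hcur, hvis⟩ := gA_traj hst
    have hvf : v ∉ visA ∅ f j := by rw [hvis]; exact hvst
    obtain ⟨hfolv, hadmv, hskip⟩ := avoid_blind hfol hadm hvf
    set g : Fin (j + 1) → Fin n := fun k => f k with hg
    have hagree : ∀ i ≤ j, f i = extT j g i := by
      intro i hi
      rw [extT_eq g hi]
    refine ⟨g, Finset.mem_filter.mpr ⟨Finset.mem_univ g, Adm_congr hagree hadmv⟩, ?_, ?_⟩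
    · exact FolA_congr hagree hfolv
    · intro e he
      simp only [hDv, Finset.mem_image, Finset.mem_filter, Finset.mem_range] at he
      obtain ⟨i, ⟨hij, hvlt⟩, rfl⟩ := he
      apply bool_eq_false
      rw [← hagree i (by omega)]
      exact hskip i hij (by rw [hagree (i + 1) (by omega)]; exact hvlt)
  refine le_trans (bP_le_sum hp0 hp1 s _ B hcontain) ?_
  have heach : ∀ g ∈ s, bP n p (B g) ≤
      bP n p (FolA {v} (extT j g) j) * (1 - p) ^ (j + 1 - (v : ℕ)) := by
    intro g hg
    have hadm : Adm ({v} : Finset (Fin n)) (extT j g) j := (Finset.mem_filter.mp hg).2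
    have hDdiag : ∀ e ∈ Dv g, ¬ e.IsDiag := by
      intro e he
      simp only [hDv, Finset.mem_image, Finset.mem_filter, Finset.mem_range] at he
      obtain ⟨i, ⟨hij, _⟩, rfl⟩ := he
      rw [Sym2.mk_isDiag_iff]
      exact hadm.ne_v hv0 (by omega)
    have hDnone : ∀ e ∈ Dv g, cF {v} (extT j g) j e = none := by
      intro e he
      simp only [hDv, Finset.mem_image, Finset.mem_filter, Finset.mem_range] at he
      obtain ⟨i, ⟨hij, _⟩, rfl⟩ := he
      exact cF_none_v hadm hv0 (by omega)
    have hcard : j + 1 - (v : ℕ) ≤ (Dv g).card := by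
      rw [hDv]
      simp only
      rw [Finset.card_image_of_injOn]
      · -- card of the filter is at least j + 1 - v
        have hsplit := Finset.card_filter_add_card_filter_not
          (s := Finset.range j) (p := fun i => v < extT j g (i + 1))
        have hcompl : ((Finset.range j).filter
            (fun i => ¬ v < extT j g (i + 1))).card ≤ (v : ℕ) - 1 := by
          have hsub : ((Finset.range j).filter (fun i => ¬ v < extT j g (i + 1))).card ≤
              (Finset.Ico 1 (v : ℕ)).card := by
            apply Finset.card_le_card_of_injOn (fun i => (extT j g (i + 1) : ℕ))
            · intro i hi
              simp only [Finset.mem_coe, Finset.mem_filter, Finset.mem_range, not_lt] at hi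
              obtain ⟨hij, hle⟩ := hi
              simp only [Finset.mem_coe, Finset.mem_Ico]
              constructor
              · rcases Nat.eq_zero_or_pos (extT j g (i + 1) : ℕ) with hz | hz
                · exfalso
                  have : extT j g (i + 1) = extT j g 0 := by
                    apply Fin.ext
                    rw [hz, hadm.1]
                  exact absurd (hadm.inj (by omega) (by omega) this) (by omega)
                · exact hz
              · have hne : extT j g (i + 1) ≠ v := fun h =>
                  hadm.ne_v hv0 (by omega : i + 1 ≤ j) h
                have : (extT j g (i + 1) : ℕ) ≤ (v : ℕ) := hle
                have : (extT j g (i + 1) : ℕ) ≠ (v : ℕ) := fun h => hne (Fin.ext h)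
                omega
            · intro a ha b hb hab
              simp only [Finset.mem_coe, Finset.mem_filter, Finset.mem_range] at ha hb
              have := hadm.inj (by omega : a + 1 ≤ j) (by omega : b + 1 ≤ j) (Fin.ext hab)
              omega
          rw [Nat.card_Ico] at hsub
          exact hsub
        rw [Finset.card_range] at hsplit
        omega
      · intro a ha b hb hab
        simp only [Finset.coe_filter, Set.mem_setOf_eq, Finset.mem_range] at ha hb
        rw [Sym2.eq_iff] at hab
        rcases hab with ⟨h1, _⟩ | ⟨h1, h2⟩
        · exact hadm.inj (by omega : a ≤ j) (by omega : b ≤ j) h1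
        · exact absurd h2.symm (hadm.ne_v hv0 (by omega : b ≤ j))
    have h1 : bP n p (B g) = bP n p (fun X => Sat (cF {v} (extT j g) j) X ∧
        ∀ e ∈ Dv g, X e = false) := by
      apply bP_congr
      intro X
      rw [hB]
      simp only
      rw [FolA_iff_sat hn hadm]
    have h2 : bP n p (FolA {v} (extT j g) j) = bP n p (Sat (cF {v} (extT j g) j)) := by
      apply bP_congr
      intro X
      rw [FolA_iff_sat hn hadm]
    rw [h1, bP_sat_extend _ (Dv g) hDdiag hDnone, h2]
    apply mul_le_mul_of_nonneg_left _ (bP_nonneg hp0 hp1 _)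
    exact pow_le_pow_of_le_one (by linarith) (by linarith) hcard
  refine le_trans (Finset.sum_le_sum heach) ?_
  rw [← Finset.sum_mul]
  have hle1 : ∑ g ∈ s, bP n p (FolA {v} (extT j g) j) ≤ 1 := by
    apply sum_bP_le_one hp0 hp1
    intro X g hgs g' hgs' hfg hfg'
    funext k
    have := FolA_unique hfg hfg' (show (k : ℕ) ≤ j by omega)
    rwa [extT_apply_fin, extT_apply_fin] at this
  calc (∑ g ∈ s, bP n p (FolA {v} (extT j g) j)) * (1 - p) ^ (j + 1 - (v : ℕ))
      ≤ 1 * (1 - p) ^ (j + 1 - (v : ℕ)) :=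
        mul_le_mul_of_nonneg_right hle1 (pow_nonneg (by linarith) _)
    _ = (1 - p) ^ (j + 1 - (v : ℕ)) := one_mul _

end probbounds

section determ
variable {n : ℕ}

lemma card_filter_not_lt (n j0 : ℕ) (h : j0 ≤ n) :
    (Finset.univ.filter fun k : Fin n => ¬ ((k : ℕ) < j0)).card = n - j0 := by
  rw [← Nat.card_Ico j0 n]
  apply Finset.card_bij (fun (k : Fin n) _ => (k : ℕ))
  · intro k hk
    simp only [Finset.mem_filter, Finset.mem_univ, true_and, not_lt] at hk
    simp only [Finset.mem_Ico]
    exact ⟨hk, k.isLt⟩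
  · intro a _ b _ hab
    exact Fin.ext hab
  · intro b hb
    simp only [Finset.mem_Ico] at hb
    refine ⟨⟨b, hb.2⟩, ?_, rfl⟩
    simp only [Finset.mem_filter, Finset.mem_univ, true_and, not_lt]
    exact hb.1

lemma zero_mem_visited {X : Sym2 (Fin n) → Bool} {j : ℕ} {st : Fin n × Finset (Fin n)}
    (hst : gA ∅ X j = some st) {v : Fin n} (hv : v ∉ st.2) : (v : ℕ) ≠ 0 := by
  obtain ⟨f, hfol, hadm, hcur, hvis⟩ := gA_traj hst
  intro h0
  apply hv
  rw [← hvis]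
  have : v = f 0 := Fin.ext (by rw [h0, hadm.1])
  rw [this]
  exact mem_visA_self _ _ (by omega)

/-- the deterministic part: survival and no-small-unvisited imply the whole event -/
lemma good_det {X : Sym2 (Fin n) → Bool} {m : ℕ} (hm1 : 1 ≤ m) (hmn : m + 1 ≤ n)
    {st : Fin n × Finset (Fin n)} (hst : gstate X (n - m - 1) = some st) (r : ℝ)
    (hsmall : ∀ v : Fin n, v ∉ st.2 → r ≤ ((v : ℕ) : ℝ) + 1) :
    ∃ hU : (Finset.univ \ st.2).Nonempty,
      r ≤ ((((Finset.univ \ st.2).min' hU : Fin n) : ℕ) : ℝ) + 1 ∧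
      ∀ σ : Equiv.Perm (Fin n),
        (∀ i : ℕ, (hi : i < n - m) →
          ∀ st' : Fin n × Finset (Fin n), gstate X i = some st' →
            σ ⟨i, Nat.lt_of_lt_of_le hi (Nat.sub_le n _)⟩ = st'.1) →
        (iotaInv σ : ℝ) ≤
          (∑ j ∈ Finset.univ.filter (fun j : Fin n => (j : ℕ) < n - m),
            (alphaInv σ j : ℝ)) +
          (m : ℝ) * ((n : ℝ) - ((((Finset.univ \ st.2).min' hU : Fin n) : ℕ) + 1)) := by
  have hn : 0 < n := by omega
  set j1 := n - m - 1 with hj1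
  have hj1n : j1 + 1 = n - m := by omega
  rw [gstate_eq_gA] at hst
  obtain ⟨f, hfol, hadm, hcur, hvis⟩ := gA_traj hst
  have hcard : st.2.card = n - m := by
    rw [← hvis, visA_empty_card hadm, hj1n]
  have hcardU : (Finset.univ \ st.2).card = m := by
    rw [Finset.card_sdiff_of_subset (Finset.subset_univ _), Finset.card_univ, Fintype.card_fin, hcard]
    omega
  have hU : (Finset.univ \ st.2).Nonempty := by
    rw [← Finset.card_pos, hcardU]
    omega
  set v0 := (Finset.univ \ st.2).min' hU with hv0
  have hv0mem : v0 ∉ st.2 := by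
    have := Finset.min'_mem _ hU
    rw [Finset.mem_sdiff] at this
    exact this.2
  refine ⟨hU, hsmall v0 hv0mem, ?_⟩
  intro σ hσ
  have hσf : ∀ i ≤ j1, ∀ hin : i < n, σ ⟨i, hin⟩ = f i := by
    intro i hi hin
    have hilt : i < n - m := by omega
    have hgi : gstate X i = some (f i, visA ∅ f i) := by
      rw [gstate_eq_gA]
      exact hfol i hi
    exact hσ i hilt _ hgi
  have hmemvis : ∀ k : Fin n, (k : ℕ) < n - m → σ k ∈ st.2 := by
    intro k hk
    have : σ k = f (k : ℕ) := by
      have := hσf (k : ℕ) (by omega) k.isLt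
      rwa [show (⟨(k : ℕ), k.isLt⟩ : Fin n) = k from Fin.ext rfl] at this
    rw [this, ← hvis]
    exact mem_visA_self _ _ (by omega)
  have hnotmem : ∀ k : Fin n, ¬ ((k : ℕ) < n - m) → σ k ∉ st.2 := by
    intro k hk hmem
    rw [← hvis] at hmem
    unfold visA at hmem
    rw [Finset.empty_union] at hmem
    obtain ⟨i, hi, hfi⟩ := Finset.mem_image.mp hmem
    rw [Finset.mem_range] at hi
    have hin : i < n := by omega
    have : σ ⟨i, hin⟩ = σ k := by rw [hσf i (by omega) hin, hfi]
    have hik : (⟨i, hin⟩ : Fin n) = k := σ.injective this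
    apply hk
    rw [← hik]
    show i < n - m
    omega
  have halpha : ∀ k : Fin n, ¬ ((k : ℕ) < n - m) →
      alphaInv σ k ≤ n - 1 - (v0 : ℕ) := by
    intro k hk
    unfold alphaInv
    have hle : ((Finset.univ.filter (fun l => k < l ∧ σ l < σ k)).card ≤
        (Finset.Ico (v0 : ℕ) ((σ k : Fin n) : ℕ)).card) := by
      apply Finset.card_le_card_of_injOn (fun l => ((σ l : Fin n) : ℕ))
      · intro l hl
        simp only [Finset.mem_coe, Finset.mem_filter, Finset.mem_univ, true_and] at hl
        obtain ⟨hkl, hlt⟩ := hl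
        have hlnm : ¬ ((l : ℕ) < n - m) := by
          have : (k : ℕ) < (l : ℕ) := hkl
          omega
        have hmem : σ l ∈ Finset.univ \ st.2 :=
          Finset.mem_sdiff.mpr ⟨Finset.mem_univ _, hnotmem l hlnm⟩
        have hge : v0 ≤ σ l := Finset.min'_le _ _ hmem
        simp only [Finset.mem_coe, Finset.mem_Ico]
        exact ⟨hge, hlt⟩
      · intro a _ b _ hab
        exact σ.injective (Fin.ext hab)
    rw [Nat.card_Ico] at hle
    have : ((σ k : Fin n) : ℕ) ≤ n - 1 := by
      have := (σ k).isLt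
      omega
    omega
  -- split the sum
  have hiota : (iotaInv σ : ℝ) =
      (∑ j ∈ Finset.univ.filter (fun j : Fin n => (j : ℕ) < n - m), (alphaInv σ j : ℝ)) +
      (∑ j ∈ Finset.univ.filter (fun j : Fin n => ¬ ((j : ℕ) < n - m)),
        (alphaInv σ j : ℝ)) := by
    rw [Finset.sum_filter_add_sum_filter_not Finset.univ (fun j : Fin n => (j : ℕ) < n - m)
      (fun j => (alphaInv σ j : ℝ))]
    unfold iotaInv
    push_cast
    rfl
  rw [hiota]
  have hc2 : (∑ j ∈ Finset.univ.filter (fun j : Fin n => ¬ ((j : ℕ) < n - m)),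
      (alphaInv σ j : ℝ)) ≤ (m : ℝ) * ((n : ℝ) - ((v0 : ℕ) + 1)) := by
    have hcast : ((n - 1 - (v0 : ℕ) : ℕ) : ℝ) = (n : ℝ) - ((v0 : ℕ) + 1) := by
      have hv0n : (v0 : ℕ) + 1 ≤ n := v0.isLt
      have : n - 1 - (v0 : ℕ) = n - ((v0 : ℕ) + 1) := by omega
      rw [this, Nat.cast_sub hv0n]
      push_cast
      ring
    calc (∑ j ∈ Finset.univ.filter (fun j : Fin n => ¬ ((j : ℕ) < n - m)),
        (alphaInv σ j : ℝ))
        ≤ (Finset.univ.filter (fun j : Fin n => ¬ ((j : ℕ) < n - m))).card •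
            ((n - 1 - (v0 : ℕ) : ℕ) : ℝ) := by
          apply Finset.sum_le_card_nsmul
          intro x hx
          simp only [Finset.mem_filter, Finset.mem_univ, true_and] at hx
          exact_mod_cast Nat.cast_le.mpr (halpha x hx)
      _ = (m : ℝ) * ((n : ℝ) - ((v0 : ℕ) + 1)) := by
          rw [card_filter_not_lt n (n - m) (by omega), nsmul_eq_mul, hcast]
          congr 2
          omega
  linarith

end determ

section finalhelpers
variable {n : ℕ} {p : ℝ}

lemma cast_sub_ge (a b : ℕ) : (a : ℝ) - b ≤ ((a - b : ℕ) : ℝ) := by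
  rcases le_total b a with h | h
  · rw [Nat.cast_sub h]
  · have h1 : a - b = 0 := by omega
    have h2 : (a : ℝ) ≤ b := Nat.cast_le.mpr h
    rw [h1]
    simp
    linarith

lemma pow_le_exp_bound (hp0 : 0 < p) (hp1 : p < 1) {k : ℕ} {c : ℝ}
    (hk : c ≤ p * k) : (1 - p) ^ k ≤ Real.exp (-c) := by
  have h1 : (1 - p) ≤ Real.exp (-p) := by
    have := Real.add_one_le_exp (-p)
    linarith
  calc (1 - p) ^ k ≤ (Real.exp (-p)) ^ k := pow_le_pow_left₀ (by linarith) h1 k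
    _ = Real.exp ((k : ℕ) * (-p)) := (Real.exp_nat_mul _ k).symm
    _ ≤ Real.exp (-c) := by
        apply Real.exp_le_exp.mpr
        have : ((k : ℕ) : ℝ) * (-p) = -(p * k) := by ring
        rw [this]
        linarith

lemma exp_neg_two_log {x : ℝ} (hx : 0 < x) : Real.exp (-(2 * Real.log x)) = 1 / x ^ 2 := by
  rw [Real.exp_neg, show (2 : ℝ) * Real.log x = ((2 : ℕ) : ℝ) * Real.log x by norm_num,
    Real.exp_nat_mul, Real.exp_log hx, one_div]

lemma bP_or_le (hp0 : 0 ≤ p) (hp1 : p ≤ 1) (A B : (Sym2 (Fin n) → Bool) → Prop) :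
    bP n p (fun X => A X ∨ B X) ≤ bP n p A + bP n p B := by
  have h := bP_le_sum hp0 hp1 (Finset.univ : Finset Bool) (fun X => A X ∨ B X)
    (fun b => Bool.rec B A b) (by
      intro X hX
      rcases hX with h | h
      · exact ⟨true, Finset.mem_univ _, h⟩
      · exact ⟨false, Finset.mem_univ _, h⟩)
  rw [Fintype.sum_bool] at h
  exact h

end finalhelpers

/-- If the greedy leftmost walk on `G(n, p₁)` is stopped when the set `U` of
unvisited vertices has size `⌈2 log n / p₁⌉` (i.e. after `j₀ = n - |U|` vertices
are visited), then w.h.p.: the walk survives to that point, the smallest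
(1-indexed) label `j₁` of a vertex of `U` satisfies `j₁ ≥ n - 4 log n / p₁`, and
every Hamilton cycle `σ` obtained by appending any Hamilton path through `U`
(i.e. agreeing with the walk in its first `j₀` positions) satisfies
`ι(σ) ≤ Σ_{j ≤ j₀} α_j(σ) + |U| (n - j₁)`. -/
theorem stmt_18 (p₁ : ℕ → ℝ) (hp0 : ∀ n, 0 < p₁ n) (hp1 : ∀ n, p₁ n < 1)
    (hreg : ∀ᶠ n : ℕ in atTop, 8 * Real.log n / p₁ n ≤ n) :
    Tendsto (fun n =>
      bP n (p₁ n) (fun X =>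
        ∃ st : Fin n × Finset (Fin n),
          gstate X (n - ⌈2 * Real.log n / p₁ n⌉₊ - 1) = some st ∧
          ∃ hU : (Finset.univ \ st.2).Nonempty,
            (n : ℝ) - 4 * Real.log n / p₁ n
                ≤ (((Finset.univ \ st.2).min' hU : Fin n) : ℕ) + 1 ∧
            ∀ σ : Equiv.Perm (Fin n),
              (∀ i : ℕ, (hi : i < n - ⌈2 * Real.log n / p₁ n⌉₊) →
                ∀ st' : Fin n × Finset (Fin n), gstate X i = some st' →
                  σ ⟨i, Nat.lt_of_lt_of_le hi (Nat.sub_le n _)⟩ = st'.1) →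
              (iotaInv σ : ℝ) ≤
                (∑ j ∈ Finset.univ.filter
                    (fun j : Fin n => (j : ℕ) < n - ⌈2 * Real.log n / p₁ n⌉₊),
                  (alphaInv σ j : ℝ)) +
                (⌈2 * Real.log n / p₁ n⌉₊ : ℝ) *
                  ((n : ℝ) - ((((Finset.univ \ st.2).min' hU : Fin n) : ℕ) + 1))))
      atTop (𝓝 1) := by
  have h2n : Tendsto (fun n : ℕ => 1 - 2 / (n : ℝ)) atTop (𝓝 1) := by
    have h0 : Tendsto (fun n : ℕ => (2 : ℝ) / n) atTop (𝓝 0) :=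
      tendsto_const_div_atTop_nhds_zero_nat 2
    have h1 : Tendsto (fun _ : ℕ => (1 : ℝ)) atTop (𝓝 1) := tendsto_const_nhds
    simpa using h1.sub h0
  apply tendsto_of_tendsto_of_tendsto_of_le_of_le' h2n tendsto_const_nhds
  · -- lower bound
    filter_upwards [hreg, eventually_ge_atTop 8] with n hregn hn8
    have hn : 0 < n := by omega
    have hn0R : (0 : ℝ) < n := by exact_mod_cast hn
    have hn8R : (8 : ℝ) ≤ n := by exact_mod_cast hn8
    set p := p₁ n with hpdef
    have hp : 0 < p := hp0 n
    have hp' : p < 1 := hp1 n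
    set L := Real.log n with hL
    have hL1 : 1 ≤ L := by
      rw [hL, Real.le_log_iff_exp_le hn0R]
      calc Real.exp 1 ≤ 2.7182818286 := le_of_lt Real.exp_one_lt_d9
        _ ≤ (n : ℝ) := by linarith
    have hLp0 : 0 < 2 * L / p := by positivity
    set m := ⌈2 * L / p⌉₊ with hm
    have hm1 : 1 ≤ m := Nat.ceil_pos.mpr hLp0
    have hmge : 2 * L / p ≤ (m : ℝ) := Nat.le_ceil _
    have hmle : (m : ℝ) ≤ 2 * L / p + 1 := le_of_lt (Nat.ceil_lt_add_one (le_of_lt hLp0))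
    have h2Lp : 2 * L / p ≤ (n : ℝ) / 4 := by
      have h8 : 8 * L / p ≤ (n : ℝ) := hregn
      have : 2 * L / p = (8 * L / p) / 4 := by ring
      rw [this]
      linarith
    have hmn : m + 2 ≤ n := by
      have h1 : (m : ℝ) ≤ (n : ℝ) / 4 + 1 := by linarith
      have h2 : (m : ℝ) + 2 ≤ (n : ℝ) := by linarith
      have : ((m + 2 : ℕ) : ℝ) ≤ (n : ℝ) := by push_cast; linarith
      exact_mod_cast this
    set r := (n : ℝ) - 4 * L / p with hr
    set E1 : (Sym2 (Fin n) → Bool) → Prop := fun X => gA ∅ X (n - m - 1) = none with hE1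
    set E2 : (Sym2 (Fin n) → Bool) → Prop := fun X =>
      ∃ st, gA ∅ X (n - m - 1) = some st ∧
        ∃ v : Fin n, v ∉ st.2 ∧ ((v : ℕ) : ℝ) + 1 < r with hE2
    have hp0' : (0 : ℝ) ≤ p := hp.le
    have hp1' : p ≤ 1 := hp'.le
    -- bound on E1
    have hE1b : bP n p E1 ≤ 1 / (n : ℝ) := by
      have hstep : bP n p E1 ≤ ∑ j ∈ Finset.range (n - m - 1),
          bP n p (fun X => ∃ st, gA ∅ X j = some st ∧ gA ∅ X (j + 1) = none) := by
        apply bP_le_sum hp0' hp1'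
        intro X hX
        obtain ⟨j, hj, st, h1, h2⟩ := gA_none_death hn hX
        exact ⟨j, Finset.mem_range.mpr hj, st, h1, h2⟩
      refine le_trans hstep (le_trans (Finset.sum_le_sum (g := fun _ => Real.exp (-(2 * L)))
        ?_) ?_)
      · intro j hj
        refine le_trans (death_bound hp0' hp1' hn j) ?_
        apply pow_le_exp_bound hp hp'
        have hjlt : j < n - m - 1 := Finset.mem_range.mp hj
        have h1 : m + 1 ≤ n - (j + 1) := by omega
        have h2 : ((m : ℝ)) + 1 ≤ ((n - (j + 1) : ℕ) : ℝ) := by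
          have : ((m + 1 : ℕ) : ℝ) ≤ ((n - (j + 1) : ℕ) : ℝ) := Nat.cast_le.mpr h1
          push_cast at this
          linarith
        calc 2 * L = p * (2 * L / p) := by field_simp
          _ ≤ p * ((n - (j + 1) : ℕ) : ℝ) := by
              apply mul_le_mul_of_nonneg_left _ hp.le
              linarith
      · rw [Finset.sum_const, Finset.card_range, nsmul_eq_mul,
          exp_neg_two_log hn0R]
        have h4 : ((n - m - 1 : ℕ) : ℝ) ≤ (n : ℝ) := Nat.cast_le.mpr (by omega)
        calc ((n - m - 1 : ℕ) : ℝ) * (1 / (n : ℝ) ^ 2)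
            ≤ (n : ℝ) * (1 / (n : ℝ) ^ 2) := by
              apply mul_le_mul_of_nonneg_right h4 (by positivity)
          _ = 1 / (n : ℝ) := by field_simp
    -- bound on E2
    have hE2b : bP n p E2 ≤ 1 / (n : ℝ) := by
      set sv := Finset.univ.filter
        (fun v : Fin n => ((v : ℕ) : ℝ) + 1 < r ∧ (v : ℕ) ≠ 0) with hsv
      have hstep : bP n p E2 ≤ ∑ v ∈ sv,
          bP n p (fun X => ∃ st, gA ∅ X (n - m - 1) = some st ∧ v ∉ st.2) := by
        apply bP_le_sum hp0' hp1'
        rintro X ⟨st, hst, v, hv, hvr⟩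
        have hv0 : (v : ℕ) ≠ 0 := zero_mem_visited hst hv
        exact ⟨v, Finset.mem_filter.mpr ⟨Finset.mem_univ _, hvr, hv0⟩, st, hst, hv⟩
      refine le_trans hstep (le_trans (Finset.sum_le_sum (g := fun _ => Real.exp (-(2 * L)))
        ?_) ?_)
      · intro v hv
        have hvmem := Finset.mem_filter.mp hv
        have hvr : ((v : ℕ) : ℝ) + 1 < r := hvmem.2.1
        have hv0 : (v : ℕ) ≠ 0 := hvmem.2.2
        refine le_trans (avoid_bound hp0' hp1' hn (n - m - 1) v hv0) ?_
        apply pow_le_exp_bound hp hp'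
        have hc1 : ((n - m - 1 + 1 - (v : ℕ) : ℕ) : ℝ) ≥ 2 * L / p := by
          have he : n - m - 1 + 1 = n - m := by omega
          rw [he]
          have h1 : ((n - m : ℕ) : ℝ) - (v : ℕ) ≤ ((n - m - (v : ℕ) : ℕ) : ℝ) :=
            cast_sub_ge _ _
          have h2 : (n : ℝ) - m ≤ ((n - m : ℕ) : ℝ) := cast_sub_ge _ _
          have h3 : ((v : ℕ) : ℝ) < (n : ℝ) - 4 * L / p - 1 := by
            rw [hr] at hvr
            linarith
          have h44 : 4 * L / p = 2 * (2 * L / p) := by ring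
          linarith
        calc 2 * L = p * (2 * L / p) := by field_simp
          _ ≤ p * ((n - m - 1 + 1 - (v : ℕ) : ℕ) : ℝ) := by
              apply mul_le_mul_of_nonneg_left _ hp.le
              linarith
      · rw [Finset.sum_const, nsmul_eq_mul, exp_neg_two_log hn0R]
        have h4 : ((sv.card : ℕ) : ℝ) ≤ (n : ℝ) := by
          have h := Finset.card_le_univ sv
          have h2 : sv.card ≤ n := by simpa using h
          exact_mod_cast h2
        calc (sv.card : ℝ) * (1 / (n : ℝ) ^ 2)
            ≤ (n : ℝ) * (1 / (n : ℝ) ^ 2) := by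
              apply mul_le_mul_of_nonneg_right h4 (by positivity)
          _ = 1 / (n : ℝ) := by field_simp
    -- decomposition and conclusion
    have key : ∀ A : (Sym2 (Fin n) → Bool) → Prop,
        (∀ X, ¬ A X → E1 X ∨ E2 X) → 1 - 2 / (n : ℝ) ≤ bP n p A := by
      intro A hA
      have h1 : bP n p (fun X => ¬ A X) ≤ bP n p E1 + bP n p E2 :=
        le_trans (bP_mono hp0' hp1' hA) (bP_or_le hp0' hp1' E1 E2)
      have h4 := bP_add_compl (n := n) (p := p) A
      have h5 : 2 / (n : ℝ) = 1 / n + 1 / n := by ring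
      linarith
    apply key
    intro X hX
    rcases hst : gstate X (n - m - 1) with _ | st
    · left
      show gA ∅ X (n - m - 1) = none
      rw [← gstate_eq_gA]
      exact hst
    · by_cases hsm : ∃ v : Fin n, v ∉ st.2 ∧ ((v : ℕ) : ℝ) + 1 < r
      · right
        rw [gstate_eq_gA] at hst
        exact ⟨st, hst, hsm⟩
      · exfalso
        apply hX
        push_neg at hsm
        refine ⟨st, hst, ?_⟩
        exact good_det hm1 (by omega) hst r (fun v hv => (hsm v hv))
  · -- upper bound by 1
    filter_upwards with n
    calc bP n (p₁ n) _ ≤ bP n (p₁ n) (fun _ => True) :=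
          bP_mono (hp0 n).le (hp1 n).le (fun X _ => trivial)
      _ = 1 := bP_true
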